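/- With β₁ = 3√(2 ln 2)/π, for all x in the interval [0, π/3], |cos(x)| ≥ exp(-β₁² x² / 2). -/

import Mathlib

open Real

private lemma cos_pos_aux {x : ℝ} (hx0 : 0 ≤ x) (hx1 : x ≤ π / 3) : 0 < Real.cos x := by
  apply Real.cos_pos_of_mem_Ioo
  constructor
  · linarith [Real.pi_pos]
  · linarith [Real.pi_pos]

private lemma h_hasDeriv {y : ℝ} (hc : Real.cos y ≠ 0) :
    HasDerivAt (fun y => y * (Real.sin y / Real.cos y) + 2 * Real.log (Real.cos y))
      ((y - Real.sin y * Real.cos y) / Real.cos y ^ 2) y := by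
  have h1 := ((Real.hasDerivAt_sin y).div (Real.hasDerivAt_cos y) hc)
  have hs := Real.sin_sq_add_cos_sq y
  have e1 : (Real.cos y * Real.cos y - Real.sin y * -Real.sin y) = 1 := by nlinarith [hs]
  rw [e1] at h1
  have h2 := (hasDerivAt_id y).mul h1
  have h3 := ((Real.hasDerivAt_cos y).log hc).const_mul 2
  convert h2.add h3 using 1
  · rfl
  · rfl
  · funext z; simp [Pi.mul_apply, Pi.div_apply]
  · simp only [Pi.div_apply, id]
    field_simp
    ring

private lemma h_nonneg {y : ℝ} (hy0 : 0 ≤ y) (hy1 : y ≤ π / 3) :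
    0 ≤ y * (Real.sin y / Real.cos y) + 2 * Real.log (Real.cos y) := by
  set h : ℝ → ℝ := fun y => y * (Real.sin y / Real.cos y) + 2 * Real.log (Real.cos y) with hh
  have key : MonotoneOn h (Set.Icc 0 (π / 3)) := by
    apply monotoneOn_of_deriv_nonneg (convex_Icc _ _)
    · apply ContinuousOn.add
      · exact continuousOn_id.mul (Real.continuousOn_sin.div Real.continuousOn_cos
          (fun z hz => (cos_pos_aux hz.1 hz.2).ne'))
      · exact (continuousOn_const.mul ((Real.continuousOn_cos).log
          (fun z hz => (cos_pos_aux hz.1 hz.2).ne')))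
    · intro z hz
      rw [interior_Icc] at hz
      exact (h_hasDeriv (cos_pos_aux hz.1.le hz.2.le).ne').differentiableAt.differentiableWithinAt
    · intro z hz
      rw [interior_Icc] at hz
      rw [(h_hasDeriv (cos_pos_aux hz.1.le hz.2.le).ne').deriv]
      apply div_nonneg _ (sq_nonneg _)
      have h2z : Real.sin (2 * z) ≤ 2 * z := Real.sin_le (by linarith [hz.1])
      rw [Real.sin_two_mul] at h2z
      nlinarith
  have h0 : h 0 = 0 := by simp [hh]
  have := key (Set.mem_Icc.mpr ⟨le_refl 0, by linarith [Real.pi_pos]⟩)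
      (Set.mem_Icc.mpr ⟨hy0, hy1⟩) hy0
  rw [h0] at this
  exact this

private lemma g_hasDeriv {y : ℝ} (hy : y ≠ 0) (hc : Real.cos y ≠ 0) :
    HasDerivAt (fun y => Real.log (Real.cos y) / y ^ 2)
      (((-Real.sin y / Real.cos y) * y ^ 2 - Real.log (Real.cos y) * (2 * y)) / (y ^ 2) ^ 2) y := by
  have h1 := (Real.hasDerivAt_cos y).log hc
  have h2 : HasDerivAt (fun y : ℝ => y ^ 2) (2 * y) y := by
    simpa using hasDerivAt_pow 2 y
  exact h1.div h2 (pow_ne_zero 2 hy)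

theorem abs_cos_ge_gaussian (x : ℝ) (hx0 : 0 ≤ x) (hx1 : x ≤ π / 3) :
    Real.exp (-((3 * Real.sqrt (2 * Real.log 2) / π) ^ 2 * x ^ 2 / 2)) ≤ |Real.cos x| := by
  have hπ := Real.pi_pos
  have hcos : 0 < Real.cos x := cos_pos_aux hx0 hx1
  rw [abs_of_pos hcos]
  have hlog2 : (0:ℝ) ≤ 2 * Real.log 2 := by positivity
  have hsq : Real.sqrt (2 * Real.log 2) ^ 2 = 2 * Real.log 2 := Real.sq_sqrt hlog2
  have hβ : (3 * Real.sqrt (2 * Real.log 2) / π) ^ 2 * x ^ 2 / 2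
      = 9 * Real.log 2 * x ^ 2 / π ^ 2 := by
    rw [div_pow, mul_pow, hsq]
    ring
  rw [hβ]
  -- main inequality: log (cos x) ≥ -(9 log 2 x^2 / π^2)
  have main : -(9 * Real.log 2 * x ^ 2 / π ^ 2) ≤ Real.log (Real.cos x) := by
    rcases eq_or_lt_of_le hx0 with h0 | hxpos
    · simp [← h0]
    · -- g antitone on [x, π/3]
      set g : ℝ → ℝ := fun y => Real.log (Real.cos y) / y ^ 2 with hg
      have anti : AntitoneOn g (Set.Icc x (π / 3)) := by
        apply antitoneOn_of_deriv_nonpos (convex_Icc _ _)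
        · apply ContinuousOn.div
          · exact Real.continuousOn_cos.log
              (fun z hz => (cos_pos_aux (le_trans hx0 hz.1) hz.2).ne')
          · fun_prop
          · intro z hz
            exact pow_ne_zero 2 (by linarith [hz.1] : z ≠ 0)
        · intro z hz
          rw [interior_Icc] at hz
          have hz0 : 0 < z := lt_trans hxpos hz.1
          exact (g_hasDeriv hz0.ne' (cos_pos_aux hz0.le hz.2.le).ne').differentiableAt.differentiableWithinAt
        · intro z hz
          rw [interior_Icc] at hz
          have hz0 : 0 < z := lt_trans hxpos hz.1
          rw [(g_hasDeriv hz0.ne' (cos_pos_aux hz0.le hz.2.le).ne').deriv]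
          apply div_nonpos_of_nonpos_of_nonneg _ (by positivity)
          have hnn := h_nonneg hz0.le hz.2.le
          have e2 : -Real.sin z / Real.cos z * z ^ 2 - Real.log (Real.cos z) * (2 * z)
              = -(z * (z * (Real.sin z / Real.cos z) + 2 * Real.log (Real.cos z))) := by ring
          rw [e2]
          exact neg_nonpos_of_nonneg (mul_nonneg hz0.le hnn)
      have hmem1 : x ∈ Set.Icc x (π / 3) := Set.mem_Icc.mpr ⟨le_refl x, hx1⟩
      have hmem2 : π / 3 ∈ Set.Icc x (π / 3) := Set.mem_Icc.mpr ⟨hx1, le_refl _⟩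
      have := anti hmem1 hmem2 hx1
      rw [hg] at this
      simp only at this
      have hval : Real.log (Real.cos (π / 3)) = -Real.log 2 := by
        rw [Real.cos_pi_div_three]
        simp [Real.log_inv]
      rw [hval] at this
      -- this : -log 2 / (π/3)^2 ≤ log (cos x) / x^2
      have hx2 : (0:ℝ) < x ^ 2 := by positivity
      rw [div_le_div_iff₀ (by positivity) hx2] at this
      rw [neg_le, le_div_iff₀ (by positivity : (0:ℝ) < π ^ 2)]
      nlinarith [this]
  calc Real.exp (-(9 * Real.log 2 * x ^ 2 / π ^ 2)) ≤ Real.exp (Real.log (Real.cos x)) :=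
        Real.exp_le_exp.mpr main
    _ = Real.cos x := Real.exp_log hcos
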